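/- arXiv:1207.4433 — 2 statements merged into one kernel-verified Lean document; each statement's English description precedes it below -/
import Mathlib

section
/- (Scalarization and dualization commute.) For all y* ∈ Y* and z* ∈ C+∖{0}: φ_{h,z*}(y*) = inf_{x ∈ X} λ_{z*}(x,y*), i.e. inf{z*(z) : z ∈ h(y*,z*)} = inf_{x ∈ X} [φ_{f,z*}(x) + φ_{g,y*}(x)]. -/
open Set Pointwise Topology Filter

noncomputable section

variable {X Y Z : Type*}
  [AddCommGroup X] [Module ℝ X] [TopologicalSpace X] [IsTopologicalAddGroup X]
  [ContinuousSMul ℝ X] [LocallyConvexSpace ℝ X]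
  [AddCommGroup Y] [Module ℝ Y] [TopologicalSpace Y] [IsTopologicalAddGroup Y]
  [ContinuousSMul ℝ Y] [LocallyConvexSpace ℝ Y]
  [AddCommGroup Z] [Module ℝ Z] [TopologicalSpace Z] [IsTopologicalAddGroup Z]
  [ContinuousSMul ℝ Z] [LocallyConvexSpace ℝ Z]

/-- The positive dual cone `C⁺`. -/
def posDual (C : Set Z) : Set (Z →L[ℝ] ℝ) := {z' | ∀ z ∈ C, 0 ≤ z' z}

/-- The halfspace `S(z*) = {z | 0 ≤ z*(z)}`. -/
def SPos (z' : Z →L[ℝ] ℝ) : Set Z := {z | 0 ≤ z' z}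

/-- `S_{(y*,z*)}(y) = {z | y*(y) ≤ z*(z)}`. -/
def SMap (y' : Y →L[ℝ] ℝ) (z' : Z →L[ℝ] ℝ) (y : Y) : Set Z := {z | y' y ≤ z' z}

/-- Scalarization: `inf {z*(z) | z ∈ A}` in `EReal` (inf ∅ = +∞). -/
def scal (z' : Z →L[ℝ] ℝ) (A : Set Z) : EReal := ⨅ z ∈ A, (z' z : EReal)

open Classical in
/-- Addition on `EReal` with the convention `(+∞) + (−∞) = (−∞) + (+∞) = +∞`. -/
def eadd (a b : EReal) : EReal := if a = ⊤ ∨ b = ⊤ then ⊤ else a + b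

/-- The set-valued Lagrangian `l(x,y*,z*) = f(x) ⊕ cl ⋃_{y ∈ g(x)} S_{(y*,z*)}(y)`. -/
def lag (f : X → Set Z) (g : X → Set Y) (x : X) (y' : Y →L[ℝ] ℝ) (z' : Z →L[ℝ] ℝ) :
    Set Z :=
  closure (f x + closure (⋃ y ∈ g x, SMap y' z' y))

/-- The dual objective `h(y*,z*) = cl ⋃_x l(x,y*,z*)`. -/
def dualObj (f : X → Set Z) (g : X → Set Y) (y' : Y →L[ℝ] ℝ) (z' : Z →L[ℝ] ℝ) : Set Z :=
  closure (⋃ x, lag f g x y' z')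

/-- The value function `v(y) = cl ⋃ {f(x) | y ∈ g(x)}`. -/
def valFn (f : X → Set Z) (g : X → Set Y) (y : Y) : Set Z :=
  closure (⋃ x ∈ {x | y ∈ g x}, f x)


set_option linter.unusedSectionVars false

/-- auxiliary: find a real `q > b` with `a + q < c`. -/
lemma my_exists_real_add_lt {a b : EReal} {c : ℝ} (ha : a ≠ ⊤) (hb : b ≠ ⊤)
    (h : a + b < (c : EReal)) : ∃ q : ℝ, b < (q : EReal) ∧ a + (q : EReal) < (c : EReal) := by
  induction a with
  | bot =>
      obtain ⟨q, hq, -⟩ := EReal.exists_between_coe_real (hb.lt_top)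
      exact ⟨q, hq, by simp⟩
  | coe r =>
      have hb' : b < ((c - r : ℝ) : EReal) := by
        have := (EReal.lt_sub_iff_add_lt (a := (c : EReal)) (b := (r : EReal))
          (.inl (EReal.coe_ne_bot r)) (.inl (EReal.coe_ne_top r))).mpr (by rwa [add_comm] at h)
        rwa [← EReal.coe_sub] at this
      obtain ⟨q, hq1, hq2⟩ := EReal.exists_between_coe_real hb'
      refine ⟨q, hq1, ?_⟩
      rw [← EReal.coe_add]
      exact_mod_cast by linarith [EReal.coe_lt_coe_iff.mp hq2]
  | top => exact absurd rfl ha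

lemma my_iInf_add_iInf {ι κ : Sort*} [Nonempty ι] [Nonempty κ] (u : ι → ℝ) (v : κ → ℝ) :
    ⨅ i, ⨅ j, ((u i + v j : ℝ) : EReal) = (⨅ i, (u i : EReal)) + ⨅ j, (v j : EReal) := by
  refine le_antisymm ?_ (le_iInf fun i => le_iInf fun j => by
    rw [EReal.coe_add]; exact add_le_add (iInf_le _ i) (iInf_le _ j))
  set a := ⨅ i, (u i : EReal)
  set b := ⨅ j, (v j : EReal)
  have ha : a ≠ ⊤ := ne_top_of_le_ne_top (EReal.coe_ne_top _) (iInf_le _ (Classical.arbitrary ι))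
  have hb : b ≠ ⊤ := ne_top_of_le_ne_top (EReal.coe_ne_top _) (iInf_le _ (Classical.arbitrary κ))
  by_contra hcon
  push_neg at hcon
  obtain ⟨c, hc1, hc2⟩ := EReal.lt_iff_exists_real_btwn.mp hcon
  obtain ⟨q, hq1, hq2⟩ := my_exists_real_add_lt ha hb hc1
  have hav : a < ((c - q : ℝ) : EReal) := by
    have := (EReal.lt_sub_iff_add_lt (a := (c : EReal)) (b := (q : EReal))
      (.inl (EReal.coe_ne_bot q)) (.inl (EReal.coe_ne_top q))).mpr hq2
    rwa [← EReal.coe_sub] at this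
  obtain ⟨i, hi⟩ := iInf_lt_iff.mp hav
  obtain ⟨j, hj⟩ := iInf_lt_iff.mp hq1
  have hi' : u i < c - q := EReal.coe_lt_coe_iff.mp hi
  have hj' : v j < q := EReal.coe_lt_coe_iff.mp hj
  have : ((u i + v j : ℝ) : EReal) < (c : EReal) := EReal.coe_lt_coe_iff.mpr (by linarith)
  exact absurd (lt_of_le_of_lt (iInf_le_of_le i (iInf_le _ j)) this) (not_lt.mpr hc2.le)

lemma my_scal_closure (z' : Z →L[ℝ] ℝ) (A : Set Z) : scal z' (closure A) = scal z' A := by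
  refine le_antisymm (iInf_le_iInf_of_subset subset_closure) (le_iInf₂ fun z hz => ?_)
  by_contra hcon
  push_neg at hcon
  obtain ⟨c, hc1, hc2⟩ := EReal.lt_iff_exists_real_btwn.mp hcon
  have hsub : A ⊆ {a | c ≤ z' a} := fun a ha => by
    have : (c : EReal) ≤ (z' a : EReal) := le_trans hc2.le (iInf₂_le a ha)
    exact EReal.coe_le_coe_iff.mp this
  have hcl : IsClosed {a : Z | c ≤ z' a} := isClosed_le continuous_const z'.continuous
  have : c ≤ z' z := (closure_minimal hsub hcl) hz
  exact absurd (EReal.coe_lt_coe_iff.mp hc1) (not_lt.mpr this)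

lemma my_scal_empty (z' : Z →L[ℝ] ℝ) : scal z' (∅ : Set Z) = ⊤ := by simp [scal]

lemma my_scal_ne_top (z' : Z →L[ℝ] ℝ) {A : Set Z} (hA : A.Nonempty) : scal z' A ≠ ⊤ := by
  obtain ⟨a, ha⟩ := hA
  exact ne_top_of_le_ne_top (EReal.coe_ne_top _) (iInf₂_le a ha)

lemma my_scal_add (z' : Z →L[ℝ] ℝ) (A B : Set Z) :
    scal z' (A + B) = eadd (scal z' A) (scal z' B) := by
  rcases A.eq_empty_or_nonempty with rfl | hA
  · simp [eadd, my_scal_empty]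
  rcases B.eq_empty_or_nonempty with rfl | hB
  · simp [eadd, my_scal_empty]
  rw [eadd, if_neg (by push_neg; exact ⟨my_scal_ne_top z' hA, my_scal_ne_top z' hB⟩)]
  have : scal z' (A + B) = ⨅ a ∈ A, ⨅ b ∈ B, ((z' a + z' b : ℝ) : EReal) := by
    rw [scal, ← Set.image2_add, iInf_image2]
    simp [map_add]
  rw [this, scal, scal]
  haveI : Nonempty A := hA.to_subtype
  haveI : Nonempty B := hB.to_subtype
  simp only [iInf_subtype']
  exact my_iInf_add_iInf (fun a : A => z' a) (fun b : B => z' b)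

lemma my_scal_iUnion {ι : Sort*} (z' : Z →L[ℝ] ℝ) (s : ι → Set Z) :
    scal z' (⋃ i, s i) = ⨅ i, scal z' (s i) := by
  rw [scal]; exact iInf_iUnion s _

lemma my_scal_SMap (y' : Y →L[ℝ] ℝ) (z' : Z →L[ℝ] ℝ) (hz0 : z' ≠ 0) (y : Y) :
    scal z' (SMap y' z' y) = (y' y : EReal) := by
  obtain ⟨z0, hz0'⟩ := DFunLike.ne_iff.mp hz0
  have h1 : z' z0 ≠ 0 := by simpa using hz0'
  set w := (y' y / z' z0) • z0 with hw_def
  have hw : z' w = y' y := by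
    rw [hw_def, map_smul, smul_eq_mul]; field_simp
  have hmem : w ∈ SMap y' z' y := by simp [SMap, hw]
  refine le_antisymm ?_ (le_iInf₂ fun z hz => EReal.coe_le_coe_iff.mpr hz)
  calc scal z' (SMap y' z' y) ≤ (z' w : EReal) := iInf₂_le w hmem
    _ = (y' y : EReal) := by rw [hw]

/-- **Scalarization and dualization commute.** For all `y* ∈ Y*` and `z* ∈ C⁺∖{0}`:
`φ_{h,z*}(y*) = inf_{x ∈ X} λ_{z*}(x,y*)`, i.e.
`inf {z*(z) | z ∈ h(y*,z*)} = inf_x [φ_{f,z*}(x) + φ_{g,y*}(x)]`. -/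
theorem scalarization_dualization_commute
    (C : Set Z) (hCconv : Convex ℝ C) (hCcone : ∀ t : ℝ, 0 < t → ∀ z ∈ C, t • z ∈ C)
    (hC0 : (0 : Z) ∈ C)
    (D : Set Y) (hDconv : Convex ℝ D) (hDcone : ∀ t : ℝ, 0 < t → ∀ y ∈ D, t • y ∈ D)
    (hD0 : (0 : Y) ∈ D)
    (f : X → Set Z) (g : X → Set Y)
    (hfF : ∀ x, f x = closure (f x + C))
    (hgF : ∀ x, g x = closure (g x + D))
    (y' : Y →L[ℝ] ℝ) (z' : Z →L[ℝ] ℝ) (hz' : z' ∈ posDual C) (hz0 : z' ≠ 0) :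
    scal z' (dualObj f g y' z') = ⨅ x : X, eadd (scal z' (f x)) (scal y' (g x)) := by
  rw [dualObj, my_scal_closure, my_scal_iUnion]
  refine iInf_congr fun x => ?_
  rw [lag, my_scal_closure, my_scal_add, my_scal_closure]
  congr 1
  rw [my_scal_iUnion]
  simp_rw [my_scal_iUnion, my_scal_SMap y' z' hz0]
  rfl
end
end

section
/- (Dual optimal value as biconjugate.) v**(0) = d, where v**(y) = ⋂_{(y*,z*) ∈ Y*×(C+∖{0})} [−v*(y*,z*) + S_{(y*,z*)}(y)] is the biconjugate of the value function and d = ⋂_{(y*,z*) ∈ Y*×(C+∖{0})} h(y*,z*) is the optimal value of the dual problem. Moreover, for every z* ∈ C+∖{0}: (v_{z*})**(0) = d_{z*}, where (v_{z*})** is the classical scalar biconjugate of v_{z*}(y) = inf{φ_{f,z*}(x) : x ∈ X, y ∈ g(x)} and d_{z*} = sup_{y* ∈ Y*} inf_{x ∈ X} λ_{z*}(x,y*). -/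
open Set Pointwise Topology Filter

noncomputable section

variable {X Y Z : Type*}
  [AddCommGroup X] [Module ℝ X] [TopologicalSpace X] [IsTopologicalAddGroup X]
  [ContinuousSMul ℝ X] [LocallyConvexSpace ℝ X]
  [AddCommGroup Y] [Module ℝ Y] [TopologicalSpace Y] [IsTopologicalAddGroup Y]
  [ContinuousSMul ℝ Y] [LocallyConvexSpace ℝ Y]
  [AddCommGroup Z] [Module ℝ Z] [TopologicalSpace Z] [IsTopologicalAddGroup Z]
  [ContinuousSMul ℝ Z] [LocallyConvexSpace ℝ Z]

section AuxLemmas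

/-- Negation turns suprema into infima in `EReal`. -/
lemma ereal_neg_iSup {ι : Sort*} (f : ι → EReal) : -⨆ i, f i = ⨅ i, -f i := by
  refine le_antisymm (le_iInf fun i => EReal.neg_le_neg_iff.mpr (le_iSup f i)) ?_
  have h : ⨆ i, f i ≤ -⨅ i, -f i := by
    refine iSup_le fun i => ?_
    have h1 := iInf_le (fun i => -f i) i
    have h2 := EReal.neg_le_neg_iff.mpr h1
    rwa [neg_neg] at h2
  have h3 := EReal.neg_le_neg_iff.mpr h
  rwa [neg_neg] at h3

/-- Adding a real constant commutes with infima in `EReal`. -/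
lemma ereal_coe_add_iInf {ι : Sort*} (r : ℝ) (f : ι → EReal) :
    (r : EReal) + ⨅ i, f i = ⨅ i, ((r : EReal) + f i) := by
  refine le_antisymm (le_iInf fun i => add_le_add_right (iInf_le f i) _) ?_
  have key : ∀ a : EReal, (r : EReal) + (((-r : ℝ) : EReal) + a) = a := by
    intro a
    rw [← add_assoc, ← EReal.coe_add, add_neg_cancel, EReal.coe_zero, zero_add]
  have h2 : ((-r : ℝ) : EReal) + ⨅ i, ((r : EReal) + f i) ≤ ⨅ i, f i := by
    refine le_iInf fun i => ?_
    calc ((-r : ℝ) : EReal) + ⨅ j, ((r : EReal) + f j)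
        ≤ ((-r : ℝ) : EReal) + ((r : EReal) + f i) :=
          add_le_add_right (iInf_le _ i) _
      _ = f i := by rw [← add_assoc, ← EReal.coe_add, neg_add_cancel, EReal.coe_zero, zero_add]
  calc (⨅ i, ((r : EReal) + f i))
      = (r : EReal) + (((-r : ℝ) : EReal) + ⨅ i, ((r : EReal) + f i)) := (key _).symm
    _ ≤ (r : EReal) + ⨅ i, f i := add_le_add_right h2 _

/-- Adding a constant to a (possibly empty) infimum of reals, with the `eadd` convention. -/
lemma biInf_coe_add {W : Type*} (s : Set W) (w : W → ℝ) (c : EReal) :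
    (⨅ y ∈ s, ((w y : EReal) + c)) = eadd c (⨅ y ∈ s, (w y : EReal)) := by
  rcases s.eq_empty_or_nonempty with rfl | ⟨y₀, hy₀⟩
  · simp [eadd]
  · have hψ : (⨅ y ∈ s, (w y : EReal)) ≠ ⊤ := by
      refine ne_top_of_le_ne_top (EReal.coe_ne_top (w y₀)) ?_
      exact iInf₂_le y₀ hy₀
    induction c with
    | bot =>
      have h1 : (⨅ y ∈ s, ((w y : EReal) + ⊥)) = ⊥ := by
        refine le_antisymm ?_ bot_le
        calc (⨅ y ∈ s, ((w y : EReal) + ⊥)) ≤ (w y₀ : EReal) + ⊥ := iInf₂_le y₀ hy₀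
          _ = ⊥ := EReal.add_bot _
      rw [h1, eadd, if_neg, EReal.bot_add]
      push_neg
      exact ⟨bot_ne_top, hψ⟩
    | coe r =>
      rw [eadd, if_neg (by push_neg; exact ⟨EReal.coe_ne_top r, hψ⟩)]
      have h2 : ∀ y : W, (⨅ (_ : y ∈ s), ((w y : EReal) + (r : EReal)))
          = (r : EReal) + ⨅ (_ : y ∈ s), (w y : EReal) := by
        intro y
        rw [ereal_coe_add_iInf]
        simp_rw [add_comm ((r : EReal)) _]
      calc (⨅ y ∈ s, ((w y : EReal) + (r : EReal)))
          = ⨅ y, ((r : EReal) + ⨅ (_ : y ∈ s), (w y : EReal)) := iInf_congr h2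
        _ = (r : EReal) + ⨅ y ∈ s, (w y : EReal) := (ereal_coe_add_iInf r _).symm
    | top =>
      have h1 : (⨅ y ∈ s, ((w y : EReal) + ⊤)) = ⊤ := by
        refine le_antisymm le_top ?_
        refine le_iInf fun y => le_iInf fun _ => ?_
        rw [EReal.add_top_of_ne_bot (EReal.coe_ne_bot _)]
      rw [h1, eadd, if_pos (Or.inl rfl)]

/-- `closure A + B ⊆ closure (A + B)` in a topological additive group. -/
lemma closure_add_subset_left (A B : Set Z) : closure A + B ⊆ closure (A + B) := by
  rintro u hu
  rw [Set.mem_add] at hu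
  obtain ⟨a, ha, b, hb, rfl⟩ := hu
  have hc : Continuous (fun z : Z => z + b) := continuous_add_right b
  have h1 : a + b ∈ (fun z : Z => z + b) '' closure A := ⟨a, ha, rfl⟩
  have h2 := image_closure_subset_closure_image hc h1
  refine closure_mono ?_ h2
  rintro _ ⟨c, hc', rfl⟩
  exact ⟨c, hc', b, hb, rfl⟩

lemma closure_add_subset_right (A B : Set Z) : A + closure B ⊆ closure (A + B) := by
  rw [add_comm A, add_comm A]
  exact closure_add_subset_left B A

lemma closure_iUnion_closure {ι : Sort*} (s : ι → Set Z) :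
    closure (⋃ i, closure (s i)) = closure (⋃ i, s i) := by
  refine le_antisymm ?_ (closure_mono (iUnion_mono fun i => subset_closure))
  refine closure_minimal ?_ isClosed_closure
  exact iUnion_subset fun i => closure_mono (subset_iUnion s i)

/-- The key pointwise identity: `-v*(y',z') + S(0) = h(-y',z')`. -/
lemma key_set (f : X → Set Z) (g : X → Set Y) (y' : Y →L[ℝ] ℝ) (z' : Z →L[ℝ] ℝ) :
    closure (⋃ y : Y, (valFn f g y + SMap y' z' (-y))) + SMap y' z' 0
      = dualObj f g (-y') z' := by
  have hS : ∀ y : Y, SMap (-y') z' y = SMap y' z' (-y) := by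
    intro y
    ext z
    simp [SMap, map_neg]
  have h0K : (0 : Z) ∈ SMap y' z' 0 := by simp [SMap]
  have hR : dualObj f g (-y') z'
      = closure (⋃ x, ⋃ y ∈ g x, (f x + SMap y' z' (-y))) := by
    rw [dualObj]
    have hlag : ∀ x, lag f g x (-y') z'
        = closure (⋃ y ∈ g x, (f x + SMap y' z' (-y))) := by
      intro x
      rw [lag]
      have h1 : closure (f x + closure (⋃ y ∈ g x, SMap (-y') z' y))
          = closure (f x + ⋃ y ∈ g x, SMap (-y') z' y) := by
        refine le_antisymm ?_ (closure_mono (Set.add_subset_add_left subset_closure))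
        refine closure_minimal ?_ isClosed_closure
        exact closure_add_subset_right _ _
      rw [h1]
      congr 1
      simp_rw [hS]
      rw [Set.add_iUnion₂]
    calc closure (⋃ x, lag f g x (-y') z')
        = closure (⋃ x, closure (⋃ y ∈ g x, (f x + SMap y' z' (-y)))) := by
          simp_rw [hlag]
      _ = closure (⋃ x, ⋃ y ∈ g x, (f x + SMap y' z' (-y))) :=
          closure_iUnion_closure _
  set U := ⋃ y : Y, (valFn f g y + SMap y' z' (-y)) with hU
  have habs : closure U + SMap y' z' 0 = closure U := by
    refine le_antisymm ?_ ?_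
    · refine (closure_add_subset_left _ _).trans ?_
      refine closure_mono ?_
      rw [hU, Set.iUnion_add]
      refine iUnion_mono fun y => ?_
      rw [add_assoc]
      refine Set.add_subset_add_left ?_
      rintro u hu
      rw [Set.mem_add] at hu
      obtain ⟨a, ha, b, hb, rfl⟩ := hu
      simp only [SMap, mem_setOf_eq, map_zero, map_add] at ha hb ⊢
      linarith
    · intro a ha
      exact ⟨a, ha, 0, h0K, add_zero a⟩
  rw [habs, hR, hU]
  have hL : closure (⋃ y : Y, (valFn f g y + SMap y' z' (-y)))
      = closure (⋃ y : Y, ⋃ x ∈ {x : X | y ∈ g x}, (f x + SMap y' z' (-y))) := by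
    have hdist : ∀ y : Y, (⋃ x ∈ {x : X | y ∈ g x}, f x) + SMap y' z' (-y)
        = ⋃ x ∈ {x : X | y ∈ g x}, (f x + SMap y' z' (-y)) := by
      intro y
      simp_rw [Set.iUnion_add]
    refine le_antisymm ?_ ?_
    · refine closure_minimal (iUnion_subset fun y => ?_) isClosed_closure
      rw [valFn]
      refine (closure_add_subset_left _ _).trans ?_
      rw [hdist y]
      exact closure_mono (subset_iUnion
        (fun y => ⋃ x ∈ {x : X | y ∈ g x}, (f x + SMap y' z' (-y))) y)
    · refine closure_mono (iUnion_mono fun y => ?_)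
      rw [← hdist y, valFn]
      exact Set.add_subset_add_right subset_closure
  rw [hL]
  rw [iUnion_comm]
  simp only [mem_setOf_eq]

end AuxLemmas

/-- **Dual optimal value as biconjugate.** `v**(0) = d`, where
`v**(y) = ⋂_{(y*,z*) ∈ Y*×(C⁺∖{0})} [−v*(y*,z*) + S_{(y*,z*)}(y)]` and
`d = ⋂_{(y*,z*) ∈ Y*×(C⁺∖{0})} h(y*,z*)`. Moreover, for every `z* ∈ C⁺∖{0}`,
`(v_{z*})**(0) = d_{z*}`, with the classical scalar biconjugate
`(v_{z*})**(y) = sup_{y*} [y*(y) − sup_{y'} (y*(y') − v_{z*}(y'))]` and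
`d_{z*} = sup_{y*} inf_x λ_{z*}(x,y*)`. -/
theorem dual_value_as_biconjugate
    (C : Set Z) (hCconv : Convex ℝ C) (hCcone : ∀ t : ℝ, 0 < t → ∀ z ∈ C, t • z ∈ C)
    (hC0 : (0 : Z) ∈ C)
    (D : Set Y) (hDconv : Convex ℝ D) (hDcone : ∀ t : ℝ, 0 < t → ∀ y ∈ D, t • y ∈ D)
    (hD0 : (0 : Y) ∈ D)
    (f : X → Set Z) (g : X → Set Y)
    (hfF : ∀ x, f x = closure (f x + C))
    (hgF : ∀ x, g x = closure (g x + D)) :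
    (⋂ (y' : Y →L[ℝ] ℝ), ⋂ z' ∈ posDual C \ {0},
        (closure (⋃ y : Y, (valFn f g y + SMap y' z' (-y))) + SMap y' z' (0 : Y)))
      = (⋂ (y' : Y →L[ℝ] ℝ), ⋂ z' ∈ posDual C \ {0}, dualObj f g y' z') ∧
    ∀ z' ∈ posDual C \ {0},
      (⨆ y' : Y →L[ℝ] ℝ, ((y' (0 : Y) : EReal) -
          ⨆ y : Y, ((y' y : EReal) - ⨅ x ∈ {x : X | y ∈ g x}, scal z' (f x))))
        = ⨆ y' : Y →L[ℝ] ℝ, ⨅ x : X, eadd (scal z' (f x)) (scal y' (g x)) := by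
  constructor
  · have step : (⋂ (y' : Y →L[ℝ] ℝ), ⋂ z' ∈ posDual C \ {0},
        (closure (⋃ y : Y, (valFn f g y + SMap y' z' (-y))) + SMap y' z' (0 : Y)))
        = ⋂ (y' : Y →L[ℝ] ℝ), ⋂ z' ∈ posDual C \ {0}, dualObj f g (-y') z' := by
      refine iInter_congr fun y' => iInter_congr fun z' => iInter_congr fun _ => ?_
      exact key_set f g y' z'
    rw [step]
    ext z
    simp only [mem_iInter]
    constructor
    · intro h y' z' hz'
      have := h (-y') z' hz'
      rwa [neg_neg] at this
    · intro h y' z' hz'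
      exact h (-y') z' hz'
  · intro z' _
    have main : ∀ y' : Y →L[ℝ] ℝ,
        -(⨆ y : Y, (((-y') y : EReal) - ⨅ x ∈ {x : X | y ∈ g x}, scal z' (f x)))
          = ⨅ x : X, eadd (scal z' (f x)) (scal y' (g x)) := by
      intro y'
      rw [ereal_neg_iSup]
      have step1 : ∀ y : Y,
          -((((-y') y : ℝ) : EReal) - ⨅ x ∈ {x : X | y ∈ g x}, scal z' (f x))
            = ⨅ x : X, ⨅ _ : y ∈ g x, ((y' y : EReal) + scal z' (f x)) := by
        intro y
        rw [sub_eq_add_neg, EReal.neg_add (Or.inl (EReal.coe_ne_bot _))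
          (Or.inl (EReal.coe_ne_top _)), sub_eq_add_neg, neg_neg]
        have hcoe : (-((((-y') y : ℝ) : EReal))) = ((y' y : ℝ) : EReal) := by
          rw [ContinuousLinearMap.neg_apply, EReal.coe_neg, neg_neg]
        rw [hcoe, ereal_coe_add_iInf]
        exact iInf_congr fun x => ereal_coe_add_iInf _ _
      calc (⨅ y : Y, -(((((-y') y : ℝ) : EReal)) - ⨅ x ∈ {x : X | y ∈ g x}, scal z' (f x)))
          = ⨅ y : Y, ⨅ x : X, ⨅ _ : y ∈ g x, ((y' y : EReal) + scal z' (f x)) :=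
            iInf_congr step1
        _ = ⨅ x : X, ⨅ y : Y, ⨅ _ : y ∈ g x, ((y' y : EReal) + scal z' (f x)) := iInf_comm
        _ = ⨅ x : X, eadd (scal z' (f x)) (scal y' (g x)) := by
            refine iInf_congr fun x => ?_
            exact biInf_coe_add (g x) (fun y => y' y) (scal z' (f x))
    have hsurj : Function.Surjective (fun w : Y →L[ℝ] ℝ => -w) := fun w => ⟨-w, neg_neg w⟩
    rw [← hsurj.iSup_comp (fun y' => ((y' (0 : Y) : EReal) -
        ⨆ y : Y, ((y' y : EReal) - ⨅ x ∈ {x : X | y ∈ g x}, scal z' (f x))))]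
    refine iSup_congr fun y' => ?_
    have h0 : (((-y') (0 : Y) : ℝ) : EReal) = 0 := by
      rw [ContinuousLinearMap.neg_apply, map_zero, neg_zero, EReal.coe_zero]
    rw [h0, sub_eq_add_neg, zero_add]
    have hm := main y'
    simp only [ContinuousLinearMap.neg_apply] at hm ⊢
    exact hm
end
end
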